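/- arXiv:1905.04219 — 6 statements merged into one kernel-verified Lean document; each statement's English description precedes it below -/
import Mathlib

section
/- In any sequence of swaps (σ_0,…,σ_t), each object passes through each edge of the graph at most once (i.e., for each object y and each edge {i,j} ∈ E there is at most one index k such that the k-th swap exchanges y between agents i and j). Consequently, every sequence of swaps whose consecutive assignments are distinct has length t ≤ n·|E|/2. -/
/-- The setting of the swap-dynamics model with `N` agents `0, 1, ..., N-1` and
`N` objects, object `j` being the object initially held by agent `j`.
Each agent has a preference list (a duplicate-free list of objects, most preferred
first), and the agents form a social network given by a simple graph. -/
structure SwapModel (N : ℕ) where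
  /-- the preference list of each agent -/
  pref : Fin N → List (Fin N)
  nodup : ∀ i, (pref i).Nodup
  /-- the underlying social network -/
  G : SimpleGraph (Fin N)

namespace SwapModel

variable {N : ℕ}

/-- Agent `i` prefers object `u` to object `v`: both appear on her preference list
and `u` appears (strictly) earlier. -/
def Prefers (M : SwapModel N) (i u v : Fin N) : Prop :=
  ∃ k l : ℕ, k < l ∧ (M.pref i)[k]? = some u ∧ (M.pref i)[l]? = some v

/-- An assignment: a bijection mapping every agent to an object on her list. -/
def IsAssignment (M : SwapModel N) (σ : Fin N → Fin N) : Prop :=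
  Function.Bijective σ ∧ ∀ i, σ i ∈ M.pref i

/-- `(σ 0, σ 1, …, σ t)` is a sequence of swaps: each next assignment arises from
the previous one by performing a swap between two adjacent agents, each of whom
prefers the object of the other agent. -/
def IsSwapSeq (M : SwapModel N) (t : ℕ) (σ : ℕ → Fin N → Fin N) : Prop :=
  M.IsAssignment (σ 0) ∧
    ∀ k, k < t → ∃ i j : Fin N, M.G.Adj i j ∧
      M.Prefers i (σ k j) (σ k i) ∧ M.Prefers j (σ k i) (σ k j) ∧
      σ (k + 1) = σ k ∘ Equiv.swap i j

end SwapModel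

namespace SwapModel

/-- In the swap sequence `σ`, object `y` passes through the edge `{i, j}` at step `k`:
the `k`-th swap exchanges the objects of agents `i` and `j`, one of which is `y`. -/
def PassesThroughAt {N : ℕ} (M : SwapModel N) (σ : ℕ → Fin N → Fin N)
    (y : Fin N) (i j : Fin N) (k : ℕ) : Prop :=
  M.G.Adj i j ∧ M.Prefers i (σ k j) (σ k i) ∧ M.Prefers j (σ k i) (σ k j) ∧
    σ (k + 1) = σ k ∘ Equiv.swap i j ∧ (σ k i = y ∨ σ k j = y)

end SwapModel


namespace SwapModel

variable {N : ℕ} (M : SwapModel N)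

theorem prefers_trans' {i u v w : Fin N} (h1 : M.Prefers i u v) (h2 : M.Prefers i v w) :
    M.Prefers i u w := by
  obtain ⟨k, l, hkl, hu, hv⟩ := h1
  obtain ⟨k', l', hkl', hv', hw⟩ := h2
  have hlen : l < (M.pref i).length := by
    by_contra h
    rw [List.getElem?_eq_none (le_of_not_gt h)] at hv
    exact nomatch hv
  have : l = k' := (List.getElem?_inj hlen (M.nodup i)).mp (hv.trans hv'.symm)
  exact ⟨k, l', lt_trans (this ▸ hkl) hkl', hu, hw⟩

theorem prefers_irrefl' {i u : Fin N} (h : M.Prefers i u u) : False := by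
  obtain ⟨k, l, hkl, hu, hv⟩ := h
  have hlen : k < (M.pref i).length := by
    by_contra h
    rw [List.getElem?_eq_none (le_of_not_gt h)] at hu
    exact nomatch hu
  exact absurd ((List.getElem?_inj hlen (M.nodup i)).mp (hu.trans hv.symm)) (ne_of_lt hkl)

theorem prefers_asymm' {i u v : Fin N} (h1 : M.Prefers i u v) (h2 : M.Prefers i v u) : False :=
  M.prefers_irrefl' (M.prefers_trans' h1 h2)

end SwapModel
namespace SwapModel

variable {N : ℕ} (M : SwapModel N)

/-- Each agent's object weakly improves along a swap sequence. -/
theorem mono' {t : ℕ} {σ : ℕ → Fin N → Fin N} (hseq : M.IsSwapSeq t σ)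
    (a : Fin N) {k k' : ℕ} (hk : k ≤ k') (hk' : k' ≤ t) :
    σ k' a = σ k a ∨ M.Prefers a (σ k' a) (σ k a) := by
  induction k' , hk using Nat.le_induction with
  | base => exact Or.inl rfl
  | succ m hm ih =>
    have hstep := hseq.2 m (lt_of_lt_of_le (Nat.lt_succ_self m) hk')
    obtain ⟨i, j, _, hpi, hpj, hσ⟩ := hstep
    have ih := ih (le_trans (Nat.le_succ m) hk')
    have hstep2 : σ (m+1) a = σ m a ∨ M.Prefers a (σ (m+1) a) (σ m a) := by
      rw [hσ]
      by_cases hai : a = i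
      · subst hai
        simp only [Function.comp_apply, Equiv.swap_apply_left]
        exact Or.inr hpi
      by_cases haj : a = j
      · subst haj
        simp only [Function.comp_apply, Equiv.swap_apply_right]
        exact Or.inr hpj
      · rw [Function.comp_apply, Equiv.swap_apply_of_ne_of_ne hai haj]
        exact Or.inl rfl
    rcases hstep2 with h1 | h1
    · rw [h1]; exact ih
    · rcases ih with h2 | h2
      · rw [h2] at h1; exact Or.inr h1
      · exact Or.inr (M.prefers_trans' h1 h2)

theorem passes_symm' {σ : ℕ → Fin N → Fin N} {y i j : Fin N} {k : ℕ}
    (h : M.PassesThroughAt σ y i j k) : M.PassesThroughAt σ y j i k := by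
  obtain ⟨hadj, hpi, hpj, hσ, hy⟩ := h
  exact ⟨hadj.symm, hpj, hpi, by rw [hσ, Equiv.swap_comm], hy.symm⟩

/-- Key lemma: an object can't pass through the same (ordered) edge twice. -/
theorem key' {t : ℕ} {σ : ℕ → Fin N → Fin N} (hseq : M.IsSwapSeq t σ)
    {y i j : Fin N} {k k' : ℕ} (hkk' : k < k') (hk' : k' < t)
    (h1 : M.PassesThroughAt σ y i j k) (h2 : M.PassesThroughAt σ y i j k') : False := by
  -- reduce to the case σ k i = y
  wlog hy : σ k i = y generalizing i j
  · exact this (M.passes_symm' h1) (M.passes_symm' h2)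
      (h1.2.2.2.2.resolve_left hy)
  obtain ⟨hadj, hpi, hpj, hσ, _⟩ := h1
  rw [hy] at hpi hpj
  -- after the swap, i holds σ k j and j holds y
  have hij : σ (k+1) i = σ k j := by
    rw [hσ]; simp [Equiv.swap_apply_left]
  have hjy : σ (k+1) j = y := by
    rw [hσ]; simp [Equiv.swap_apply_right, hy]
  have hk1 : k + 1 ≤ k' := hkk'
  -- i always prefers her object to y from step k+1 on
  have hiy : M.Prefers i (σ k' i) y := by
    rcases M.mono' hseq i hk1 (le_of_lt hk') with h | h
    · rw [h, hij]; exact hpi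
    · rw [hij] at h; exact M.prefers_trans' h hpi
  -- j's object at k' is y or preferred to y
  have hjy' : σ k' j = y ∨ M.Prefers j (σ k' j) y := by
    rcases M.mono' hseq j hk1 (le_of_lt hk') with h | h
    · exact Or.inl (h.trans hjy)
    · rw [hjy] at h; exact Or.inr h
  obtain ⟨_, hpi', hpj', _, hy'⟩ := h2
  have hne : σ k' i ≠ y := fun h => M.prefers_irrefl' (h ▸ hiy)
  have hyj : σ k' j = y := hy'.resolve_left hne
  rw [hyj] at hpi'
  exact M.prefers_asymm' hiy hpi'

end SwapModel
/-- In any sequence of swaps `(σ 0, …, σ t)`, each object passes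
through each edge of the graph at most once.  Consequently, every sequence of swaps
whose consecutive assignments are distinct has length `t ≤ N * |E| / 2`. -/
theorem statement1 {N : ℕ} (M : SwapModel N) [DecidableRel M.G.Adj]
    (t : ℕ) (σ : ℕ → Fin N → Fin N) (hseq : M.IsSwapSeq t σ) :
    (∀ (y : Fin N) (i j : Fin N) (k k' : ℕ), k < t → k' < t →
      M.PassesThroughAt σ y i j k → M.PassesThroughAt σ y i j k' → k = k') ∧
    ((∀ k, k < t → σ (k + 1) ≠ σ k) → t ≤ N * M.G.edgeFinset.card / 2) := by
  classical
  have part1 : ∀ (y : Fin N) (i j : Fin N) (k k' : ℕ), k < t → k' < t →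
      M.PassesThroughAt σ y i j k → M.PassesThroughAt σ y i j k' → k = k' := by
    intro y i j k k' hk hk' h1 h2
    rcases lt_trichotomy k k' with h | h | h
    · exact (M.key' hseq h hk' h1 h2).elim
    · exact h
    · exact (M.key' hseq h hk h2 h1).elim
  refine ⟨part1, fun _ => ?_⟩
  rcases Nat.eq_zero_or_pos t with ht | ht
  · simp [ht]
  obtain ⟨i0, -, -⟩ := hseq.2 0 ht
  choose I J hadj hpi hpj hσc using hseq.2
  have hpass : ∀ (k : ℕ) (hk : k < t) (b : Bool),
      M.PassesThroughAt σ (if b then σ k (I k hk) else σ k (J k hk)) (I k hk) (J k hk) k := by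
    intro k hk b
    refine ⟨hadj k hk, hpi k hk, hpj k hk, hσc k hk, ?_⟩
    cases b
    · exact Or.inr (by simp)
    · exact Or.inl (by simp)
  set f : ℕ × Bool → Fin N × Sym2 (Fin N) := fun p =>
    if h : p.1 < t then
      ((if p.2 then σ p.1 (I p.1 h) else σ p.1 (J p.1 h)), s(I p.1 h, J p.1 h))
    else (i0, s(i0, i0)) with hf
  have hmaps : ∀ p ∈ (Finset.range t) ×ˢ (Finset.univ : Finset Bool),
      f p ∈ (Finset.univ : Finset (Fin N)) ×ˢ M.G.edgeFinset := by
    intro p hp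
    simp only [Finset.mem_product, Finset.mem_range] at hp
    rw [Finset.mem_product, hf]
    simp only [dif_pos hp.1]
    exact ⟨Finset.mem_univ _, SimpleGraph.mem_edgeFinset.mpr
      ((SimpleGraph.mem_edgeSet _).mpr (hadj p.1 hp.1))⟩
  have hinj : Set.InjOn f ((Finset.range t) ×ˢ (Finset.univ : Finset Bool)) := by
    rintro ⟨k, b⟩ hp ⟨k', b'⟩ hq hfeq
    simp only [Finset.coe_product, Set.mem_prod, Finset.mem_coe, Finset.mem_range] at hp hq
    have hp1 : k < t := hp.1
    have hq1 : k' < t := hq.1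
    rw [hf] at hfeq
    simp only [dif_pos hp1, dif_pos hq1, Prod.mk.injEq] at hfeq
    obtain ⟨hobj, hedge⟩ := hfeq
    have h1 := hpass k hp1 b
    have h2 : M.PassesThroughAt σ (if b then σ k (I k hp1) else σ k (J k hp1))
        (I k' hq1) (J k' hq1) k' := by
      have := hpass k' hq1 b'
      rwa [← hobj] at this
    have hkk : k = k' := by
      rcases Sym2.eq_iff.mp hedge with ⟨hI, hJ⟩ | ⟨hI, hJ⟩
      · rw [← hI, ← hJ] at h2
        exact part1 _ _ _ _ _ hp1 hq1 h1 h2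
      · have h2' := M.passes_symm' h2
        rw [← hI, ← hJ] at h2'
        exact part1 _ _ _ _ _ hp1 hq1 h1 h2'
    subst hkk
    have hbb : b = b' := by
      by_contra hbb
      have hIJ : σ k (I k hp1) = σ k (J k hp1) := by
        cases b <;> cases b' <;> simp_all
      have := hpi k hp1
      rw [← hIJ] at this
      exact M.prefers_irrefl' this
    rw [hbb]
  have hcard := Finset.card_le_card_of_injOn f hmaps (by rwa [Finset.coe_product] )
  rw [Finset.card_product, Finset.card_product, Finset.card_range, Finset.card_univ,
    Finset.card_univ, Fintype.card_fin, Fintype.card_bool] at hcard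
  omega
end

section
/- Under the stated setup, if agent 1 prefers x_n to x_q, then no agent a_z with 3 ≤ z ≤ s has object x_n in her preference list. -/
/-- A swap: agent `a1` gives object `o1` to agent `a2` and receives object `o2`;
this records the swap `τ = {{a1, o1}, {a2, o2}}`. -/
structure Swap (N : ℕ) where
  a1 : Fin N
  o1 : Fin N
  a2 : Fin N
  o2 : Fin N

namespace SwapModel

variable {N : ℕ}

/-- The assignment `σ` admits the swap `τ`. -/
def Admitted (M : SwapModel N) (σ : Fin N → Fin N) (τ : Swap N) : Prop :=
  σ τ.a1 = τ.o1 ∧ σ τ.a2 = τ.o2 ∧ M.G.Adj τ.a1 τ.a2 ∧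
    M.Prefers τ.a1 τ.o2 τ.o1 ∧ M.Prefers τ.a2 τ.o1 τ.o2

/-- The assignment obtained from `σ` by performing the swap `τ`. -/
def applySwap (σ : Fin N → Fin N) (τ : Swap N) : Fin N → Fin N :=
  σ ∘ Equiv.swap τ.a1 τ.a2

/-- The assignment obtained from `σ` by performing a sequence of swaps. -/
def applySeq (σ : Fin N → Fin N) : List (Swap N) → (Fin N → Fin N)
  | [] => σ
  | τ :: φ => applySeq (applySwap σ τ) φ

/-- `φ` is a valid swap sequence for the start assignment `σ`. -/
def ValidSeq (M : SwapModel N) (σ : Fin N → Fin N) : List (Swap N) → Prop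
  | [] => True
  | τ :: φ => M.Admitted σ τ ∧ M.ValidSeq (applySwap σ τ) φ

/-- Object `x` is reachable for agent `I` from the initial assignment `σ0`. -/
def Reachable (M : SwapModel N) (σ0 : Fin N → Fin N) (I x : Fin N) : Prop :=
  ∃ φ : List (Swap N), M.ValidSeq σ0 φ ∧ applySeq σ0 φ I = x

end SwapModel

/-- The agent that gives away object `q` in the swap `τ` (assuming `τ` involves `q`). -/
def giver {N : ℕ} (q : Fin N) (τ : Swap N) : Fin N :=
  if τ.o1 = q then τ.a1 else τ.a2



/- ===== Auxiliary development ===== -/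

/-- The object other than `q` involved in a swap `τ` (assuming `τ` involves `q`). -/
def otherObj {N : ℕ} (q : Fin N) (τ : Swap N) : Fin N :=
  if τ.o1 = q then τ.o2 else τ.o1

namespace SwapModel

variable {N : ℕ}

theorem applySeq_append (σ : Fin N → Fin N) (l1 l2 : List (Swap N)) :
    applySeq σ (l1 ++ l2) = applySeq (applySeq σ l1) l2 := by
  induction l1 generalizing σ with
  | nil => rfl
  | cons τ t ih => simp only [List.cons_append, applySeq]; exact ih _

theorem ValidSeq.append {M : SwapModel N} {σ : Fin N → Fin N} {l1 l2 : List (Swap N)}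
    (h : M.ValidSeq σ (l1 ++ l2)) : M.ValidSeq σ l1 ∧ M.ValidSeq (applySeq σ l1) l2 := by
  induction l1 generalizing σ with
  | nil => exact ⟨trivial, h⟩
  | cons τ t ih =>
    obtain ⟨h1, h2⟩ := h
    obtain ⟨h3, h4⟩ := ih h2
    exact ⟨⟨h1, h3⟩, h4⟩

theorem ValidSeq.admitted {M : SwapModel N} {σ : Fin N → Fin N} {l : List (Swap N)}
    (h : M.ValidSeq σ l) (t : ℕ) (ht : t < l.length) :
    M.Admitted (applySeq σ (l.take t)) (l[t]) := by
  induction l generalizing σ t with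
  | nil => simp at ht
  | cons τ l ih =>
    cases t with
    | zero => exact h.1
    | succ t =>
      simp only [List.take_succ_cons, List.getElem_cons_succ, applySeq]
      exact ih h.2 t (by simpa using ht)

theorem applySeq_take_succ (σ : Fin N → Fin N) (l : List (Swap N)) (t : ℕ) (ht : t < l.length) :
    applySeq σ (l.take (t+1)) = applySwap (applySeq σ (l.take t)) l[t] := by
  rw [List.take_succ, List.getElem?_eq_getElem ht,
    show (some l[t]).toList = [l[t]] from rfl, applySeq_append]
  rfl

theorem applySeq_injective {σ : Fin N → Fin N} (hσ : Function.Injective σ)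
    (l : List (Swap N)) : Function.Injective (applySeq σ l) := by
  induction l generalizing σ with
  | nil => exact hσ
  | cons τ t ih => exact ih (hσ.comp (Equiv.swap τ.a1 τ.a2).injective)

theorem getElem?_inj {α} {l : List α} (h : l.Nodup) {i j : ℕ} {x : α}
    (hi : l[i]? = some x) (hj : l[j]? = some x) : i = j := by
  rw [List.getElem?_eq_some_iff] at hi hj
  obtain ⟨hi1, hi2⟩ := hi
  obtain ⟨hj1, hj2⟩ := hj
  exact h.getElem_inj_iff.mp (hi2.trans hj2.symm)

theorem Prefers.ne' {M : SwapModel N} {i u v : Fin N} (h : M.Prefers i u v) : u ≠ v := by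
  obtain ⟨k, l, hkl, hk, hl⟩ := h
  rintro rfl
  have := getElem?_inj (M.nodup i) hk hl
  omega

theorem top_not_prefers {M : SwapModel N} {A c : Fin N} (h0 : (M.pref A)[0]? = some c) :
    ∀ u, ¬ M.Prefers A u c := by
  rintro u ⟨k, l, hkl, _, hl⟩
  have := getElem?_inj (M.nodup A) hl h0
  omega

theorem pref_eq {M : SwapModel N} {A c q b : Fin N} (hlen : (M.pref A).length ≤ 3)
    (h1 : M.Prefers A c q) (h2 : M.Prefers A q b) :
    M.pref A = [c, q, b] := by
  obtain ⟨k1, l1, h11, hc1, hq1⟩ := h1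
  obtain ⟨k2, l2, h22, hq2, hb2⟩ := h2
  have e12 : l1 = k2 := getElem?_inj (M.nodup A) hq1 hq2
  have hl2 : l2 < (M.pref A).length := (List.getElem?_eq_some_iff.mp hb2).1
  have hk10 : k1 = 0 := by omega
  have hl11 : l1 = 1 := by omega
  have hl22 : l2 = 2 := by omega
  have hlen3 : (M.pref A).length = 3 := by omega
  obtain ⟨x, y, w, hxyw⟩ := List.length_eq_three.mp hlen3
  subst hk10 hl11 hl22
  rw [hxyw] at hc1 hq1 hb2 ⊢
  simp only [List.getElem?_cons_zero, List.getElem?_cons_succ,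
    Option.some.injEq] at hc1 hq1 hb2
  rw [hc1, hq1, hb2]

theorem top_stays {M : SwapModel N} {i w : Fin N} (htop : ∀ u, ¬ M.Prefers i u w) :
    ∀ (l : List (Swap N)) (σ : Fin N → Fin N), M.ValidSeq σ l → σ i = w →
      applySeq σ l i = w := by
  intro l
  induction l with
  | nil => exact fun σ _ h => h
  | cons τ t ih =>
    intro σ hv hi
    obtain ⟨⟨h1, h2, _, h4, h5⟩, hv2⟩ := hv
    refine ih _ hv2 ?_
    show σ (Equiv.swap τ.a1 τ.a2 i) = w
    rcases eq_or_ne i τ.a1 with rfl | hne1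
    · exact absurd ((h1.symm.trans hi) ▸ h4) (htop _)
    · rcases eq_or_ne i τ.a2 with rfl | hne2
      · exact absurd ((h2.symm.trans hi) ▸ h5) (htop _)
      · rw [Equiv.swap_apply_of_ne_of_ne hne1 hne2, hi]

theorem obj_stays {M : SwapModel N} {i q : Fin N} :
    ∀ (l : List (Swap N)) (σ : Fin N → Fin N), M.ValidSeq σ l →
      (∀ τ ∈ l, ¬(τ.o1 = q ∨ τ.o2 = q)) → σ i = q → applySeq σ l i = q := by
  intro l
  induction l with
  | nil => exact fun σ _ _ h => h
  | cons τ t ih =>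
    intro σ hv hP hi
    obtain ⟨⟨h1, h2, _, _, _⟩, hv2⟩ := hv
    refine ih _ hv2 (fun τ' hτ' => hP τ' (List.mem_cons_of_mem _ hτ')) ?_
    show σ (Equiv.swap τ.a1 τ.a2 i) = q
    have hPτ := hP τ List.mem_cons_self
    have hne1 : i ≠ τ.a1 := fun h => hPτ (Or.inl (h1.symm.trans (h ▸ hi)))
    have hne2 : i ≠ τ.a2 := fun h => hPτ (Or.inr (h2.symm.trans (h ▸ hi)))
    rw [Equiv.swap_apply_of_ne_of_ne hne1 hne2, hi]

end SwapModel

theorem filt_spec {α} (P : α → Bool) :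
    ∀ (L : List α) (k : ℕ) (hk : k < (L.filter P).length),
      ∃ t, ∃ ht : t < L.length, (L[t] = (L.filter P)[k]'hk) ∧
        ((L.take t).filter P).length = k := by
  intro L
  induction L with
  | nil => intro k hk; simp at hk
  | cons x L ih =>
    intro k hk
    by_cases hPx : P x
    · have hk' : k < (x :: L.filter P).length := by
        simpa [List.filter_cons_of_pos hPx] using hk
      cases k with
      | zero =>
        refine ⟨0, by simp, ?_, by simp⟩
        simp [List.filter_cons_of_pos hPx]
      | succ k =>
        obtain ⟨t, ht, h1, h2⟩ := ih k (by simpa using hk')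
        refine ⟨t+1, by simpa using ht, ?_, ?_⟩
        · simpa [List.filter_cons_of_pos hPx] using h1
        · simp [List.filter_cons_of_pos hPx, h2]
    · have hk' : k < (L.filter P).length := by
        simpa [List.filter_cons_of_neg (by simpa using hPx)] using hk
      obtain ⟨t, ht, h1, h2⟩ := ih k hk'
      refine ⟨t+1, by simpa using ht, ?_, ?_⟩
      · simpa [List.filter_cons_of_neg (by simpa using hPx)] using h1
      · simp [List.filter_cons_of_neg (by simpa using hPx), h2]

theorem count_mono {α} (P : α → Bool) (L : List α) {n m : ℕ} (h : n ≤ m) :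
    ((L.take n).filter P).length ≤ ((L.take m).filter P).length := by
  have e : L.take n = (L.take m).take n := by rw [List.take_take, min_eq_left h]
  rw [e]
  exact ((List.take_prefix n (L.take m)).sublist.filter _).length_le

theorem count_succ {α} (P : α → Bool) (L : List α) {t : ℕ} (ht : t < L.length)
    (hP : P L[t]) :
    ((L.take (t+1)).filter P).length = ((L.take t).filter P).length + 1 := by
  rw [List.take_succ, List.getElem?_eq_getElem ht,
    show (some L[t]).toList = [L[t]] from rfl, List.filter_append]
  simp [List.filter_cons_of_pos hP]

theorem filt_pair {α} (P : α → Bool) (L : List α) (k : ℕ)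
    (hk : k + 1 < (L.filter P).length) :
    ∃ t1 t2 : ℕ, ∃ h12 : t1 < t2, ∃ ht2 : t2 < L.length,
      (L[t1]'(h12.trans ht2) = (L.filter P)[k]'(by omega)) ∧
      (L[t2] = (L.filter P)[k+1]) ∧
      ∀ j, ∀ hj : j < L.length, t1 < j → j < t2 → ¬ (P L[j] = true) := by
  obtain ⟨t1, ht1, e1, c1⟩ := filt_spec P L k (by omega)
  obtain ⟨t2, ht2, e2, c2⟩ := filt_spec P L (k+1) hk
  have hP1 : P (L[t1]'ht1) = true := by
    rw [e1]; exact (List.mem_filter.mp (List.getElem_mem _)).2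
  have h12 : t1 < t2 := by
    by_contra h
    have := count_mono P L (show t2 ≤ t1 by omega)
    omega
  refine ⟨t1, t2, h12, ht2, e1, e2, ?_⟩
  intro j hj hj1 hj2 hPj
  have e3 := count_succ P L ht1 hP1
  have e4 := count_succ P L hj hPj
  have m1 := count_mono P L (show t1 + 1 ≤ j by omega)
  have m2 := count_mono P L (show j + 1 ≤ t2 by omega)
  omega

namespace SwapModel

theorem seg_facts {N : ℕ} {M : SwapModel N} {φ : List (Swap N)} (hv : M.ValidSeq id φ)
    {t t' : ℕ} (h : t ≤ t') :
    M.ValidSeq (applySeq id (φ.take t)) ((φ.take t').drop t) ∧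
    applySeq id (φ.take t') =
      applySeq (applySeq id (φ.take t)) ((φ.take t').drop t) := by
  have hdec : φ.take t' = φ.take t ++ (φ.take t').drop t := by
    nth_rewrite 1 [← List.take_append_drop t (φ.take t')]
    rw [List.take_take, min_eq_left h]
  have hv2 : M.ValidSeq id (φ.take t' ++ φ.drop t') := by
    rw [List.take_append_drop]; exact hv
  have hv' : M.ValidSeq id (φ.take t') := hv2.append.1
  constructor
  · rw [hdec] at hv'; exact hv'.append.2
  · nth_rewrite 1 [hdec]
    rw [applySeq_append]

end SwapModel

open SwapModel in
/-- Core argument: the giver of `q` in a non-initial `q`-swap of `φ'` received `q` in the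
previous `q`-swap; her preference facts, and the object she receives is not `Fin.last N`. -/
theorem core_lemma (N : ℕ) (M : SwapModel (N + 1))
    (hpref3 : ∀ i, (M.pref i).length ≤ 3)
    (φ : List (Swap (N + 1))) (hvalid : M.ValidSeq id φ)
    (hne : φ ≠ [])
    (hlast : ((φ.getLast hne).a1 = 0 ∧ (φ.getLast hne).o2 = Fin.last N) ∨
             ((φ.getLast hne).a2 = 0 ∧ (φ.getLast hne).o1 = Fin.last N))
    (q : Fin (N + 1)) (r : ℕ) (hr : r < φ.length)
    (hτr : ((φ[r]'hr).a1 = 0 ∧ (φ[r]'hr).o2 = q) ∨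
           ((φ[r]'hr).a2 = 0 ∧ (φ[r]'hr).o1 = q))
    (hlq : Fin.last N ≠ q)
    (φ' : List (Swap (N + 1)))
    (hφ' : φ' = (φ.take (r + 1)).filter (fun τ => decide (τ.o1 = q ∨ τ.o2 = q)))
    (k : ℕ) (hk1 : k + 1 < φ'.length) :
    M.Prefers (giver q (φ'[k+1]'hk1)) q (otherObj q (φ'[k]'(by omega))) ∧
    M.Prefers (giver q (φ'[k+1]'hk1)) (otherObj q (φ'[k+1]'hk1)) q ∧
    otherObj q (φ'[k+1]'hk1) ≠ Fin.last N := by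
  subst hφ'
  obtain ⟨t1, t2, h12, ht2, e1, e2, hbet⟩ :=
    filt_pair (fun τ => decide (τ.o1 = q ∨ τ.o2 = q)) (φ.take (r+1)) k hk1
  have hLr : (φ.take (r+1)).length ≤ r + 1 := by rw [List.length_take]; omega
  have ht2r : t2 ≤ r := by omega
  have ht2φ : t2 < φ.length := by
    have := ht2; rw [List.length_take] at this; omega
  have ht1φ : t1 < φ.length := by omega
  have eφ1 : φ[t1]'ht1φ =
      ((φ.take (r+1)).filter (fun τ => decide (τ.o1 = q ∨ τ.o2 = q)))[k]'(by omega) :=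
    (List.getElem_take).symm.trans e1
  have eφ2 : φ[t2]'ht2φ =
      ((φ.take (r+1)).filter (fun τ => decide (τ.o1 = q ∨ τ.o2 = q)))[k+1]'hk1 :=
    (List.getElem_take).symm.trans e2
  have AdmA := hvalid.admitted t1 ht1φ
  have AdmB := hvalid.admitted t2 ht2φ
  have hA1A2 : (φ[t1]'ht1φ).a1 ≠ (φ[t1]'ht1φ).a2 := AdmA.2.2.1.ne
  have hB1B2 : (φ[t2]'ht2φ).a1 ≠ (φ[t2]'ht2φ).a2 := AdmB.2.2.1.ne
  have PA : (φ[t1]'ht1φ).o1 = q ∨ (φ[t1]'ht1φ).o2 = q := by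
    have hm : (φ[t1]'ht1φ) ∈ (φ.take (r+1)).filter (fun τ => decide (τ.o1 = q ∨ τ.o2 = q)) := by
      rw [eφ1]; exact List.getElem_mem _
    simpa using (List.mem_filter.mp hm).2
  have PB : (φ[t2]'ht2φ).o1 = q ∨ (φ[t2]'ht2φ).o2 = q := by
    have hm : (φ[t2]'ht2φ) ∈ (φ.take (r+1)).filter (fun τ => decide (τ.o1 = q ∨ τ.o2 = q)) := by
      rw [eφ2]; exact List.getElem_mem _
    simpa using (List.mem_filter.mp hm).2
  rw [← eφ1, ← eφ2]
  set recvA := if (φ[t1]'ht1φ).o1 = q then (φ[t1]'ht1φ).a2 else (φ[t1]'ht1φ).a1 with hrecv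
  have hstep1 : applySeq id (φ.take (t1+1)) recvA = q := by
    rw [applySeq_take_succ id φ t1 ht1φ]
    simp only [applySwap, Function.comp_apply]
    by_cases hq1 : (φ[t1]'ht1φ).o1 = q
    · rw [hrecv, if_pos hq1, Equiv.swap_apply_right]
      exact AdmA.1.trans hq1
    · rw [hrecv, if_neg hq1, Equiv.swap_apply_left]
      exact AdmA.2.1.trans (PA.resolve_left hq1)
  have PrefA : M.Prefers recvA q (otherObj q (φ[t1]'ht1φ)) := by
    unfold recvA
    unfold otherObj
    by_cases hq1 : (φ[t1]'ht1φ).o1 = q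
    · rw [if_pos hq1, if_pos hq1]
      have := AdmA.2.2.2.2
      rwa [hq1] at this
    · rw [if_neg hq1, if_neg hq1]
      have := AdmA.2.2.2.1
      rwa [PA.resolve_left hq1] at this
  have hnonq : ∀ τ ∈ (φ.take t2).drop (t1+1), ¬(τ.o1 = q ∨ τ.o2 = q) := by
    intro τ hτ hor
    rw [List.mem_iff_getElem] at hτ
    obtain ⟨u, hu, huτ⟩ := hτ
    have hseglen : ((φ.take t2).drop (t1+1)).length = t2 - (t1+1) := by
      rw [List.length_drop, List.length_take]; omega
    have hj2 : t1 + 1 + u < t2 := by omega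
    have hjφ : t1 + 1 + u < φ.length := by omega
    have hjL : t1 + 1 + u < (φ.take (r+1)).length := by rw [List.length_take]; omega
    have h1 : ((φ.take t2).drop (t1+1))[u]'hu = φ[t1+1+u]'hjφ := by
      rw [List.getElem_drop]
      exact List.getElem_take
    have h2 : (φ.take (r+1))[t1+1+u]'hjL = φ[t1+1+u]'hjφ := List.getElem_take
    exact hbet (t1+1+u) hjL (by omega) hj2 (by rw [h2, ← h1, huτ]; simp [hor])
  have hrecvq2 : applySeq id (φ.take t2) recvA = q := by
    obtain ⟨hvseg, hform⟩ := seg_facts hvalid (show t1+1 ≤ t2 by omega)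
    rw [hform]
    exact obj_stays _ _ hvseg hnonq hstep1
  have hAq : applySeq id (φ.take t2) (giver q (φ[t2]'ht2φ)) = q := by
    unfold giver
    by_cases hq1 : (φ[t2]'ht2φ).o1 = q
    · rw [if_pos hq1]; exact AdmB.1.trans hq1
    · rw [if_neg hq1]; exact AdmB.2.1.trans (PB.resolve_left hq1)
  have hinj : Function.Injective (applySeq id (φ.take t2)) :=
    applySeq_injective Function.injective_id _
  have hAg : giver q (φ[t2]'ht2φ) = recvA := hinj (hAq.trans hrecvq2.symm)
  have P1 : M.Prefers (giver q (φ[t2]'ht2φ)) q (otherObj q (φ[t1]'ht1φ)) := by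
    rw [hAg]; exact PrefA
  have P2 : M.Prefers (giver q (φ[t2]'ht2φ)) (otherObj q (φ[t2]'ht2φ)) q := by
    unfold giver otherObj
    by_cases hq1 : (φ[t2]'ht2φ).o1 = q
    · rw [if_pos hq1, if_pos hq1]
      have := AdmB.2.2.2.1
      rwa [hq1] at this
    · rw [if_neg hq1, if_neg hq1]
      have := AdmB.2.2.2.2
      rwa [PB.resolve_left hq1] at this
  refine ⟨P1, P2, ?_⟩
  intro hc
  have hpl := pref_eq (hpref3 _) P2 P1
  have htop : ∀ u, ¬ M.Prefers (giver q (φ[t2]'ht2φ)) u (otherObj q (φ[t2]'ht2φ)) :=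
    top_not_prefers (by rw [hpl]; rfl)
  have hrecvlast : applySeq id (φ.take (t2+1)) (giver q (φ[t2]'ht2φ)) =
      otherObj q (φ[t2]'ht2φ) := by
    rw [applySeq_take_succ id φ t2 ht2φ]
    simp only [applySwap, Function.comp_apply]
    unfold giver otherObj
    by_cases hq1 : (φ[t2]'ht2φ).o1 = q
    · rw [if_pos hq1, if_pos hq1, Equiv.swap_apply_left]
      exact AdmB.2.1
    · rw [if_neg hq1, if_neg hq1, Equiv.swap_apply_right]
      exact AdmB.1
  rcases eq_or_lt_of_le (show t2 ≤ φ.length - 1 by omega) with heq | hlt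
  · -- τ'_{k+1} is the last swap of φ
    have hrt2 : r = t2 := by omega
    subst hrt2
    have hglB : φ.getLast hne = φ[r]'ht2φ := by
      rw [List.getLast_eq_getElem]
      congr 1
      omega
    rw [hglB] at hlast
    rcases hτr with ⟨ha1, ho2⟩ | ⟨ha2, ho1⟩ <;> rcases hlast with ⟨hb1, hb2⟩ | ⟨hb1, hb2⟩
    · exact hlq (hb2.symm.trans ho2)
    · exact hB1B2 (ha1.trans hb1.symm)
    · exact hB1B2 (hb1.trans ha2.symm)
    · exact hlq (hb2.symm.trans ho1)
  · -- the giver keeps her top object until the end; contradiction with the last swap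
    obtain ⟨hvseg2, hform2⟩ := seg_facts hvalid (show t2+1 ≤ φ.length - 1 by omega)
    have hlastA : applySeq id (φ.take (φ.length - 1)) (giver q (φ[t2]'ht2φ)) =
        otherObj q (φ[t2]'ht2φ) := by
      rw [hform2]
      exact top_stays htop _ _ hvseg2 hrecvlast
    have hmφ : φ.length - 1 < φ.length := by omega
    have AdmL := hvalid.admitted (φ.length - 1) hmφ
    have hglB : φ.getLast hne = φ[φ.length - 1]'hmφ := List.getLast_eq_getElem _
    have hinj2 : Function.Injective (applySeq id (φ.take (φ.length - 1))) :=
      applySeq_injective Function.injective_id _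
    rcases hlast with ⟨hb1, hb2⟩ | ⟨hb1, hb2⟩
    · rw [hglB] at hb1 hb2
      have h1 : applySeq id (φ.take (φ.length - 1)) (φ[φ.length - 1]'hmφ).a2 =
          otherObj q (φ[t2]'ht2φ) := by
        rw [AdmL.2.1, hb2, ← hc]
      have heqA : (φ[φ.length - 1]'hmφ).a2 = giver q (φ[t2]'ht2φ) :=
        hinj2 (h1.trans hlastA.symm)
      have hprefL := AdmL.2.2.2.2
      rw [heqA, hb2, ← hc] at hprefL
      exact htop _ hprefL
    · rw [hglB] at hb1 hb2
      have h1 : applySeq id (φ.take (φ.length - 1)) (φ[φ.length - 1]'hmφ).a1 =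
          otherObj q (φ[t2]'ht2φ) := by
        rw [AdmL.1, hb2, ← hc]
      have heqA : (φ[φ.length - 1]'hmφ).a1 = giver q (φ[t2]'ht2φ) :=
        hinj2 (h1.trans hlastA.symm)
      have hprefL := AdmL.2.2.2.1
      rw [heqA, hb2, ← hc] at hprefL
      exact htop _ hprefL

/-- Lemma 1 (vi).  Under the setup of Lemma 1 (agents `0, …, N`,
preference lists of length at most three, initial assignment `σ0 = id`, a valid swap
sequence `φ` in which agent `0` obtains object `Fin.last N` in the last swap, the swap
`τr = φ[r] = {{0, p}, {k, q}}`, `φ'` the subsequence of the prefix `φ[0..r]` of swaps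
involving object `q`, and `a z` the agent giving away `q` in the `z`-th swap of `φ'`),
if agent `0` prefers object `Fin.last N` to object `q`, then no agent `a z` with
`3 ≤ z ≤ s` has object `Fin.last N` in her preference list. -/
theorem statement4 (N : ℕ) (M : SwapModel (N + 1))
    (hpref3 : ∀ i, (M.pref i).length ≤ 3)
    (φ : List (Swap (N + 1))) (hvalid : M.ValidSeq id φ)
    (hne : φ ≠ [])
    (hlast : ((φ.getLast hne).a1 = 0 ∧ (φ.getLast hne).o2 = Fin.last N) ∨
             ((φ.getLast hne).a2 = 0 ∧ (φ.getLast hne).o1 = Fin.last N))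
    (p q : Fin (N + 1)) (r : ℕ) (hr : r < φ.length)
    (hτr : ((φ[r]'hr).a1 = 0 ∧ (φ[r]'hr).o1 = p ∧ (φ[r]'hr).o2 = q) ∨
           ((φ[r]'hr).a2 = 0 ∧ (φ[r]'hr).o2 = p ∧ (φ[r]'hr).o1 = q))
    (φ' : List (Swap (N + 1)))
    (hφ' : φ' = (φ.take (r + 1)).filter (fun τ => decide (τ.o1 = q ∨ τ.o2 = q)))
    (a : ℕ → Fin (N + 1))
    (ha : ∀ (z : ℕ) (h1 : 1 ≤ z) (hz : z ≤ φ'.length),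
      a z = giver q (φ'[z - 1]'(by omega)))
    (hap : a (φ'.length + 1) = p) :
    ∀ hpn : M.Prefers 0 (Fin.last N) q,
    ∀ z, 3 ≤ z → z ≤ φ'.length → Fin.last N ∉ M.pref (a z) := by
  intro hpn z h3 hzs hmem
  have hlq : Fin.last N ≠ q := hpn.ne'
  have hτr' : ((φ[r]'hr).a1 = 0 ∧ (φ[r]'hr).o2 = q) ∨
      ((φ[r]'hr).a2 = 0 ∧ (φ[r]'hr).o1 = q) := by
    rcases hτr with ⟨h1, _, h3'⟩ | ⟨h1, _, h3'⟩
    · exact Or.inl ⟨h1, h3'⟩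
    · exact Or.inr ⟨h1, h3'⟩
  have hk1 : z - 2 + 1 < φ'.length := by omega
  obtain ⟨P1, P2, hcne⟩ :=
    core_lemma N M hpref3 φ hvalid hne hlast q r hr hτr' hlq φ' hφ' (z-2) hk1
  have hgeq : φ'[z-2+1]'hk1 = φ'[z-1]'(by omega) := by congr 1; omega
  have haz : a z = giver q (φ'[z-1]'(by omega)) := ha z (by omega) hzs
  have haz' : a z = giver q (φ'[z-2+1]'hk1) := by rw [haz, hgeq]
  have hpl := SwapModel.pref_eq (hpref3 _) P2 P1
  rw [haz', hpl] at hmem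
  simp only [List.mem_cons, List.not_mem_nil, or_false] at hmem
  rcases hmem with h | h | h
  · exact hcne h.symm
  · exact hlq h
  · have hk2 : z - 3 + 1 < φ'.length := by omega
    obtain ⟨_, _, hcne2⟩ :=
      core_lemma N M hpref3 φ hvalid hne hlast q r hr hτr' hlq φ' hφ' (z-3) hk2
    have hgeq2 : φ'[z-3+1]'hk2 = φ'[z-2]'(by omega) := by congr 1; omega
    rw [hgeq2] at hcne2
    exact hcne2 h.symm
end

section
/- If the directed graph D contains a directed path from vertex n to vertex 1, then object x_n is reachable for agent 1 from the initial assignment σ_0. -/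
/-- The arc relation of the directed graph `D = (V, F)` with
`F = {(i,j) : {i,j} ∈ E, x_j ≻_i x_n, x_n ≻_j x_j}` (objects being identified with
the index of the agent initially holding them, and `x_n` being object `Fin.last N`). -/
def ArcD {N : ℕ} (M : SwapModel (N + 1)) (i j : Fin (N + 1)) : Prop :=
  M.G.Adj i j ∧ M.Prefers i j (Fin.last N) ∧ M.Prefers j (Fin.last N) j

/-- `D` contains a directed path from vertex `u` to vertex `v`. -/
def HasDirPathD {N : ℕ} (M : SwapModel (N + 1)) (u v : Fin (N + 1)) : Prop :=
  ∃ (k : ℕ) (c : ℕ → Fin (N + 1)), c 0 = u ∧ c k = v ∧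
    (∀ m, m < k → ArcD M (c m) (c (m + 1))) ∧
    (∀ m m', m ≤ k → m' ≤ k → c m = c m' → m = m')

private theorem statement5_aux {N : ℕ} (M : SwapModel (N + 1)) (c : ℕ → Fin (N + 1)) (k : ℕ)
    (harc : ∀ m, m < k → ArcD M (c m) (c (m + 1)))
    (hinj : ∀ m m', m ≤ k → m' ≤ k → c m = c m' → m = m') :
    ∀ d m, m + d = k → ∀ σ : Fin (N + 1) → Fin (N + 1),
      σ (c m) = Fin.last N → (∀ j, m < j → j ≤ k → σ (c j) = c j) →
      ∃ φ, M.ValidSeq σ φ ∧ SwapModel.applySeq σ φ (c k) = Fin.last N := by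
  intro d
  induction d with
  | zero =>
    intro m hm σ h1 _
    exact ⟨[], trivial, by subst hm; simpa [SwapModel.applySeq] using h1⟩
  | succ d ih =>
    intro m hm σ h1 h2
    have hmk : m < k := by omega
    obtain ⟨hadj, hp1, hp2⟩ := harc m hmk
    have hσ2 : σ (c (m + 1)) = c (m + 1) := h2 (m + 1) (by omega) (by omega)
    set τ : Swap (N + 1) := ⟨c m, Fin.last N, c (m + 1), c (m + 1)⟩ with hτ
    have hadm : M.Admitted σ τ := ⟨h1, hσ2, hadj, hp1, hp2⟩
    set σ' := SwapModel.applySwap σ τ with hσ'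
    have h1' : σ' (c (m + 1)) = Fin.last N := by
      simp only [hσ', SwapModel.applySwap, hτ, Function.comp_apply,
        Equiv.swap_apply_right]
      exact h1
    have h2' : ∀ j, m + 1 < j → j ≤ k → σ' (c j) = c j := by
      intro j hj1 hj2
      have hne1 : c j ≠ c m := fun h => by
        have := hinj j m hj2 (by omega) h; omega
      have hne2 : c j ≠ c (m + 1) := fun h => by
        have := hinj j (m + 1) hj2 (by omega) h; omega
      simp only [hσ', SwapModel.applySwap, hτ, Function.comp_apply,
        Equiv.swap_apply_of_ne_of_ne hne1 hne2]
      exact h2 j (by omega) hj2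
    obtain ⟨φ, hv, he⟩ := ih (m + 1) (by omega) σ' h1' h2'
    exact ⟨τ :: φ, ⟨hadm, hv⟩, he⟩

/-- Agents are `0, …, N` (agent `0` playing the role of "agent 1"
and `Fin.last N` the role of "agent n"), every preference list has length at most
three, and the initial assignment is `σ0 = id`.  If the directed graph `D` contains
a directed path from vertex `Fin.last N` to vertex `0`, then object `Fin.last N`
(i.e. `x_n`) is reachable for agent `0` from `σ0`. -/
theorem statement5 (N : ℕ) (M : SwapModel (N + 1))
    (hpref3 : ∀ i, (M.pref i).length ≤ 3)
    (hpath : HasDirPathD M (Fin.last N) 0) :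
    M.Reachable id 0 (Fin.last N) := by
  obtain ⟨k, c, hc0, hck, harc, hinj⟩ := hpath
  obtain ⟨φ, hv, he⟩ := statement5_aux M c k harc hinj k 0 (Nat.zero_add k) id
    (by simpa using hc0) (fun j _ _ => rfl)
  exact ⟨φ, hv, by rw [← hck]; exact he⟩
end

section
/- If there exists a valid swap sequence starting from σ_0 whose last swap gives object x_n to agent 1 in exchange for her initial object x_1 (i.e., the last swap is {{1,x_1},{k,x_n}} for some agent k), then the directed graph D contains a directed path from vertex n to vertex 1. -/
namespace Aux6

open SwapModel

variable {n : ℕ}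

theorem prefers_trans (M : SwapModel n) {i u v w : Fin n}
    (h1 : M.Prefers i u v) (h2 : M.Prefers i v w) : M.Prefers i u w := by
  obtain ⟨k1, l1, hkl1, hk1, hl1⟩ := h1
  obtain ⟨k2, l2, hkl2, hk2, hl2⟩ := h2
  have he : l1 = k2 :=
    (List.getElem?_inj (List.getElem?_eq_some_iff.mp hl1).1 (M.nodup i)).mp (hl1.trans hk2.symm)
  exact ⟨k1, l2, lt_trans (he ▸ hkl1) hkl2, hk1, hl2⟩

theorem prefers_ne (M : SwapModel n) {i u v : Fin n} (h : M.Prefers i u v) : u ≠ v := by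
  obtain ⟨k, l, hkl, hk, hl⟩ := h
  intro he
  subst he
  exact absurd
    ((List.getElem?_inj (List.getElem?_eq_some_iff.mp hk).1 (M.nodup i)).mp (hk.trans hl.symm))
    (Nat.ne_of_lt hkl)

theorem prefers_asymm (M : SwapModel n) {i u v : Fin n}
    (h1 : M.Prefers i u v) (h2 : M.Prefers i v u) : False :=
  prefers_ne M (prefers_trans M h1 h2) rfl

theorem no_chain3 (M : SwapModel n) {i a b c d : Fin n} (hlen : (M.pref i).length ≤ 3)
    (h1 : M.Prefers i a b) (h2 : M.Prefers i b c) (h3 : M.Prefers i c d) : False := by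
  obtain ⟨k1, l1, hkl1, hk1, hl1⟩ := h1
  obtain ⟨k2, l2, hkl2, hk2, hl2⟩ := h2
  obtain ⟨k3, l3, hkl3, hk3, hl3⟩ := h3
  have e1 : l1 = k2 :=
    (List.getElem?_inj (List.getElem?_eq_some_iff.mp hl1).1 (M.nodup i)).mp (hl1.trans hk2.symm)
  have e2 : l2 = k3 :=
    (List.getElem?_inj (List.getElem?_eq_some_iff.mp hl2).1 (M.nodup i)).mp (hl2.trans hk3.symm)
  have h3' : l3 < (M.pref i).length := (List.getElem?_eq_some_iff.mp hl3).1
  omega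

theorem applySeq_bijective (σ : Fin n → Fin n) (hb : Function.Bijective σ)
    (φ : List (Swap n)) : Function.Bijective (applySeq σ φ) := by
  induction φ generalizing σ with
  | nil => exact hb
  | cons τ φ ih => exact ih _ (hb.comp (Equiv.swap τ.a1 τ.a2).bijective)

theorem validSeq_step (M : SwapModel n) (ψ : List (Swap n)) (σ : Fin n → Fin n)
    (h : M.ValidSeq σ ψ) (t : ℕ) (ht : t < ψ.length) :
    M.Admitted (applySeq σ (ψ.take t)) (ψ[t]'ht) ∧
      applySeq σ (ψ.take (t + 1)) = applySwap (applySeq σ (ψ.take t)) (ψ[t]'ht) := by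
  induction ψ generalizing σ t with
  | nil => simp at ht
  | cons τ ψ ih =>
    obtain ⟨hadm, hrest⟩ := h
    cases t with
    | zero => exact ⟨hadm, rfl⟩
    | succ t =>
      have ht' : t < ψ.length := by simpa using ht
      exact ih (applySwap σ τ) hrest t ht'

theorem improve (M : SwapModel n) (φ : List (Swap n)) (hv : M.ValidSeq id φ)
    (t : ℕ) (j : Fin n) : ∀ t', t ≤ t' → t' ≤ φ.length →
    applySeq id (φ.take t') j = applySeq id (φ.take t) j ∨
      M.Prefers j (applySeq id (φ.take t') j) (applySeq id (φ.take t) j) := by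
  intro t'
  induction t' with
  | zero =>
    intro h _
    have : t = 0 := Nat.le_zero.mp h
    subst this
    exact Or.inl rfl
  | succ t' ih =>
    intro h h'
    rcases Nat.lt_or_ge t (t' + 1) with hlt | hge
    swap
    · have : t = t' + 1 := by omega
      subst this
      exact Or.inl rfl
    have ht' : t ≤ t' := Nat.lt_succ_iff.mp hlt
    have hT : t' < φ.length := h'
    have prev := ih ht' (le_of_lt hT)
    obtain ⟨hadm, hstep⟩ := validSeq_step M φ id hv t' hT
    obtain ⟨ha1, ha2, hadj, hp1, hp2⟩ := hadm
    have key : applySeq id (φ.take (t' + 1)) j = applySeq id (φ.take t') j ∨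
        M.Prefers j (applySeq id (φ.take (t' + 1)) j) (applySeq id (φ.take t') j) := by
      rw [hstep]
      show applySeq id (φ.take t') (Equiv.swap (φ[t']'hT).a1 (φ[t']'hT).a2 j) = _ ∨
        M.Prefers j (applySeq id (φ.take t') (Equiv.swap (φ[t']'hT).a1 (φ[t']'hT).a2 j)) _
      by_cases hj1 : j = (φ[t']'hT).a1
      · subst hj1
        rw [Equiv.swap_apply_left, ha1, ha2]
        exact Or.inr hp1
      by_cases hj2 : j = (φ[t']'hT).a2
      · subst hj2
        rw [Equiv.swap_apply_right, ha1, ha2]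
        exact Or.inr hp2
      · rw [Equiv.swap_apply_of_ne_of_ne hj1 hj2]
        exact Or.inl rfl
    rcases key with ke | kp <;> rcases prev with pe | pp
    · exact Or.inl (ke.trans pe)
    · exact Or.inr (ke ▸ pp)
    · exact Or.inr (pe ▸ kp)
    · exact Or.inr (prefers_trans M kp pp)

theorem noRehold (M : SwapModel n) (φ : List (Swap n)) (hv : M.ValidSeq id φ)
    (X j : Fin n) (u v : ℕ)
    (hu : M.Prefers j (applySeq id (φ.take (u + 1)) j) X)
    (huv : u + 1 ≤ v) (hvT : v ≤ φ.length)
    (hsv : applySeq id (φ.take v) j = X) : False := by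
  rcases improve M φ hv (u + 1) j v huv hvT with he | hp
  · rw [hsv] at he
    rw [← he] at hu
    exact prefers_ne M hu rfl
  · rw [hsv] at hp
    exact prefers_asymm M hu hp

/-- The invariant maintained along the swap sequence: a partial directed path
tracking the agents who have held object `X` so far. -/
def Inv (M : SwapModel n) (φ : List (Swap n)) (X : Fin n) (t : ℕ) : Prop :=
  ∃ (k : ℕ) (c : ℕ → Fin n) (u : ℕ → ℕ),
    c 0 = X ∧
    applySeq id (φ.take t) (c k) = X ∧
    (∀ i, i + 1 < k → M.G.Adj (c i) (c (i + 1)) ∧ M.Prefers (c i) (c (i + 1)) X ∧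
        M.Prefers (c (i + 1)) X (c (i + 1))) ∧
    (∀ i, i + 1 = k → ∃ y, M.G.Adj (c i) (c k) ∧ M.Prefers (c i) y X ∧
        M.Prefers (c k) X y ∧ (y = c k ∨ M.Prefers (c k) y (c k))) ∧
    (∀ i, i < k → applySeq id (φ.take (u i)) (c i) = X ∧
        M.Prefers (c i) (applySeq id (φ.take (u i + 1)) (c i)) X ∧ u i < t) ∧
    (∀ i, i + 1 < k → u i < u (i + 1))

theorem step_key (M : SwapModel n) (hpref3 : ∀ i, (M.pref i).length ≤ 3)
    (φ : List (Swap n)) (hv : M.ValidSeq id φ) (X : Fin n)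
    (t : ℕ) (a1 a2 o2 : Fin n)
    (ha1 : applySeq id (φ.take t) a1 = X)
    (ha2 : applySeq id (φ.take t) a2 = o2)
    (hadj : M.G.Adj a1 a2)
    (hp1 : M.Prefers a1 o2 X) (hp2 : M.Prefers a2 X o2)
    (hstep : applySeq id (φ.take (t + 1)) = applySeq id (φ.take t) ∘ Equiv.swap a1 a2)
    (htT : t ≤ φ.length)
    (k : ℕ) (c : ℕ → Fin n) (u : ℕ → ℕ)
    (h0 : c 0 = X) (hk : applySeq id (φ.take t) (c k) = X)
    (harc : ∀ i, i + 1 < k → M.G.Adj (c i) (c (i + 1)) ∧ M.Prefers (c i) (c (i + 1)) X ∧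
        M.Prefers (c (i + 1)) X (c (i + 1)))
    (hpend : ∀ i, i + 1 = k → ∃ y, M.G.Adj (c i) (c k) ∧ M.Prefers (c i) y X ∧
        M.Prefers (c k) X y ∧ (y = c k ∨ M.Prefers (c k) y (c k)))
    (hgive : ∀ i, i < k → applySeq id (φ.take (u i)) (c i) = X ∧
        M.Prefers (c i) (applySeq id (φ.take (u i + 1)) (c i)) X ∧ u i < t)
    (hmono : ∀ i, i + 1 < k → u i < u (i + 1))
    (hck : c k = a1) :
    Inv M φ X (t + 1) := by
  classical
  have hz : M.Prefers (c k) o2 X := by rw [hck]; exact hp1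
  have harc' : ∀ i, i + 1 = k → M.G.Adj (c i) (c k) ∧ M.Prefers (c i) (c k) X ∧
      M.Prefers (c k) X (c k) := by
    intro i hi
    obtain ⟨y, hA, hpy, hXy, hy⟩ := hpend i hi
    have hyk : y = c k := by
      rcases hy with h | h
      · exact h
      · exact absurd (no_chain3 M (hpref3 (c k)) hz hXy h) not_false
    rw [hyk] at hpy hXy
    exact ⟨hA, hpy, hXy⟩
  refine ⟨k + 1, Function.update c (k + 1) a2, Function.update u k t, ?_, ?_, ?_, ?_, ?_, ?_⟩
  · rw [Function.update_of_ne (by omega : (0:ℕ) ≠ k + 1)]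
    exact h0
  · rw [Function.update_self, hstep]
    show applySeq id (φ.take t) (Equiv.swap a1 a2 a2) = X
    rw [Equiv.swap_apply_right]
    exact ha1
  · intro i hi
    rw [Function.update_of_ne (by omega : i ≠ k + 1)]
    rcases Nat.lt_or_ge (i + 1) k with h | h
    · rw [Function.update_of_ne (by omega : i + 1 ≠ k + 1)]
      exact harc i h
    · have hik : i + 1 = k := by omega
      rw [Function.update_of_ne (by omega : i + 1 ≠ k + 1), hik]
      exact harc' i hik
  · intro i hi
    have hik : i = k := by omega
    subst hik
    refine ⟨o2, ?_⟩
    rw [Function.update_of_ne (by omega : i ≠ i + 1), Function.update_self]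
    refine ⟨by rw [hck]; exact hadj, hz, hp2, ?_⟩
    rcases improve M φ hv 0 a2 t (Nat.zero_le t) htT with he | hp
    · left; rw [← ha2, he]; rfl
    · right
      rw [ha2] at hp
      exact hp
  · intro i hi
    rcases Nat.lt_or_ge i k with h | h
    · rw [Function.update_of_ne (by omega : i ≠ k + 1), Function.update_of_ne (by omega : i ≠ k)]
      obtain ⟨x1, x2, x3⟩ := hgive i h
      exact ⟨x1, x2, by omega⟩
    · have hik : i = k := by omega
      subst hik
      rw [Function.update_of_ne (by omega : i ≠ i + 1), Function.update_self]
      refine ⟨hk, ?_, by omega⟩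
      rw [hstep]
      show M.Prefers (c i) (applySeq id (φ.take t) (Equiv.swap a1 a2 (c i))) X
      rw [hck, Equiv.swap_apply_left, ha2, ← hck]
      exact hz
  · intro i hi
    rcases Nat.lt_or_ge (i + 1) k with h | h
    · rw [Function.update_of_ne (by omega : i ≠ k), Function.update_of_ne (by omega : i + 1 ≠ k)]
      exact hmono i h
    · have hik : i + 1 = k := by omega
      rw [Function.update_of_ne (by omega : i ≠ k), hik, Function.update_self]
      exact (hgive i (by omega)).2.2

end Aux6

open SwapModel

/-- Agents are `0, …, N` (agent `0` playing the role of "agent 1"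
and `Fin.last N` the role of "agent n"), every preference list has length at most
three, and the initial assignment is `σ0 = id`.  If there is a valid swap sequence
starting from `σ0` whose last swap gives object `Fin.last N` (i.e. `x_n`) to agent `0`
in exchange for her initial object `0` (i.e. `x_1`), then the directed graph `D`
contains a directed path from vertex `Fin.last N` to vertex `0`. -/
theorem statement6 (N : ℕ) (M : SwapModel (N + 1))
    (hpref3 : ∀ i, (M.pref i).length ≤ 3)
    (φ₀ : List (Swap (N + 1))) (τ : Swap (N + 1))
    (hvalid : M.ValidSeq id (φ₀ ++ [τ]))
    (hτ : (τ.a1 = 0 ∧ τ.o1 = 0 ∧ τ.o2 = Fin.last N) ∨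
          (τ.a2 = 0 ∧ τ.o2 = 0 ∧ τ.o1 = Fin.last N)) :
    HasDirPathD M (Fin.last N) 0 := by
  classical
  set φ : List (Swap (N + 1)) := φ₀ ++ [τ] with hφ
  set L := φ₀.length with hL
  have hlen : φ.length = L + 1 := by simp [hφ, hL]
  have hinj : ∀ t : ℕ, Function.Injective (applySeq id (φ.take t)) :=
    fun t => (Aux6.applySeq_bijective id Function.bijective_id _).injective
  have inv : ∀ t, t ≤ L → Aux6.Inv M φ (Fin.last N) t := by
    intro t
    induction t with
    | zero =>
      intro _
      exact ⟨0, fun _ => Fin.last N, fun _ => 0, rfl, rfl,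
        fun i hi => absurd hi (by omega), fun i hi => absurd hi (by omega),
        fun i hi => absurd hi (by omega), fun i hi => absurd hi (by omega)⟩
    | succ t ih =>
      intro ht1
      have ht : t < φ.length := by omega
      obtain ⟨k, c, u, h0, hk, harc, hpend, hgive, hmono⟩ := ih (by omega)
      obtain ⟨hadm, hst⟩ := Aux6.validSeq_step M φ id hvalid t ht
      obtain ⟨ha1, ha2, hadj, hp1, hp2⟩ := hadm
      by_cases h1 : c k = (φ[t]'ht).a1
      · have ho1 : (φ[t]'ht).o1 = Fin.last N := by rw [← ha1, ← h1, hk]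
        rw [ho1] at ha1 hp1 hp2
        exact Aux6.step_key M hpref3 φ hvalid _ t _ _ _ ha1 ha2 hadj hp1 hp2 hst (by omega)
          k c u h0 hk harc hpend hgive hmono h1
      by_cases h2 : c k = (φ[t]'ht).a2
      · have ho2 : (φ[t]'ht).o2 = Fin.last N := by rw [← ha2, ← h2, hk]
        rw [ho2] at ha2 hp1 hp2
        have hst' : applySeq id (φ.take (t + 1)) =
            applySeq id (φ.take t) ∘ Equiv.swap (φ[t]'ht).a2 (φ[t]'ht).a1 := by
          rw [hst]
          unfold SwapModel.applySwap
          rw [Equiv.swap_comm]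
        exact Aux6.step_key M hpref3 φ hvalid _ t _ _ _ ha2 ha1 hadj.symm hp2 hp1 hst'
          (by omega) k c u h0 hk harc hpend hgive hmono h2
      · refine ⟨k, c, u, h0, ?_, harc, hpend, ?_, hmono⟩
        · rw [hst]
          show applySeq id (φ.take t) (Equiv.swap (φ[t]'ht).a1 (φ[t]'ht).a2 (c k)) = Fin.last N
          rw [Equiv.swap_apply_of_ne_of_ne h1 h2]
          exact hk
        · intro i hi
          obtain ⟨x1, x2, x3⟩ := hgive i hi
          exact ⟨x1, x2, by omega⟩
  obtain ⟨k, c, u, h0, hk, harc, hpend, hgive, hmono⟩ := inv L le_rfl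
  have htL : L < φ.length := by omega
  obtain ⟨hadm, hst⟩ := Aux6.validSeq_step M φ id hvalid L htL
  have hgetτ : φ[L]'htL = τ := List.getElem_concat_length (l := φ₀) (a := τ) (i := L) rfl htL
  rw [hgetτ] at hadm hst
  obtain ⟨ha1, ha2, hadjτ, hp1, hp2⟩ := hadm
  obtain ⟨b, hb0, hbX, hadj0, hpr0, hprb, hswap⟩ : ∃ b : Fin (N + 1),
      applySeq id (φ.take L) 0 = 0 ∧ applySeq id (φ.take L) b = Fin.last N ∧
      M.G.Adj 0 b ∧ M.Prefers 0 (Fin.last N) 0 ∧ M.Prefers b 0 (Fin.last N) ∧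
      applySeq id (φ.take (L + 1)) = applySeq id (φ.take L) ∘ Equiv.swap 0 b := by
    rcases hτ with ⟨e1, e2, e3⟩ | ⟨e1, e2, e3⟩
    · rw [e1] at ha1 hadjτ hp1
      rw [e2] at ha1 hp1 hp2
      rw [e3] at ha2 hp1 hp2
      refine ⟨τ.a2, ha1, ha2, hadjτ, hp1, hp2, ?_⟩
      rw [hst]
      unfold SwapModel.applySwap
      rw [e1]
    · rw [e1] at ha2 hadjτ hp2
      rw [e2] at ha2 hp1 hp2
      rw [e3] at ha1 hp1 hp2
      refine ⟨τ.a1, ha2, ha1, hadjτ.symm, hp2, hp1, ?_⟩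
      rw [hst]
      unfold SwapModel.applySwap
      rw [e1, Equiv.swap_comm]
  have hbck : c k = b := hinj L (by rw [hk, hbX])
  have hz : M.Prefers (c k) 0 (Fin.last N) := by rw [hbck]; exact hprb
  have harc' : ∀ i, i + 1 = k → M.G.Adj (c i) (c k) ∧ M.Prefers (c i) (c k) (Fin.last N) ∧
      M.Prefers (c k) (Fin.last N) (c k) := by
    intro i hi
    obtain ⟨y, hA, hpy, hXy, hy⟩ := hpend i hi
    have hyk : y = c k := by
      rcases hy with h | h
      · exact h
      · exact absurd (Aux6.no_chain3 M (hpref3 (c k)) hz hXy h) not_false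
    rw [hyk] at hpy hXy
    exact ⟨hA, hpy, hXy⟩
  have hCe : ∀ i, i ≤ k → Function.update c (k + 1) (0 : Fin (N + 1)) i = c i :=
    fun i hi => Function.update_of_ne (by omega) _ _
  set V : ℕ → ℕ := fun i => if i = k + 1 then L + 1 else if i = k then L else u i with hV
  have hVk1 : V (k + 1) = L + 1 := by simp [hV]
  have hVk : V k = L := by simp [hV]
  have hVu : ∀ a, a < k → V a = u a := fun a ha => by
    simp only [hV]; rw [if_neg (by omega : a ≠ k + 1), if_neg (by omega : a ≠ k)]
  have hVle : ∀ a, a ≤ k + 1 → V a ≤ L + 1 := by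
    intro a ha
    rcases Nat.lt_or_ge a k with h | h
    · rw [hVu a h]; have := (hgive a h).2.2; omega
    rcases Nat.lt_or_ge a (k + 1) with h' | h'
    · have : a = k := by omega
      subst this; omega
    · have : a = k + 1 := by omega
      subst this; omega
  have hV1 : ∀ i, i ≤ k + 1 →
      applySeq id (φ.take (V i)) (Function.update c (k + 1) (0 : Fin (N + 1)) i) =
        Fin.last N := by
    intro i hi
    rcases Nat.lt_or_ge i k with h | h
    · rw [hCe i (by omega), hVu i h]
      exact (hgive i h).1
    rcases Nat.lt_or_ge i (k + 1) with h' | h'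
    · have : i = k := by omega
      subst this
      rw [hCe i le_rfl, hVk]
      exact hk
    · have : i = k + 1 := by omega
      subst this
      rw [Function.update_self, hVk1, hswap]
      show applySeq id (φ.take L) (Equiv.swap 0 b 0) = Fin.last N
      rw [Equiv.swap_apply_left]
      exact hbX
  have hV2 : ∀ i, i ≤ k →
      M.Prefers (Function.update c (k + 1) (0 : Fin (N + 1)) i)
        (applySeq id (φ.take (V i + 1)) (Function.update c (k + 1) (0 : Fin (N + 1)) i))
        (Fin.last N) := by
    intro i hi
    rcases Nat.lt_or_ge i k with h | h
    · rw [hCe i (by omega), hVu i h]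
      exact (hgive i h).2.1
    · have : i = k := by omega
      subst this
      rw [hCe i le_rfl, hVk, hswap, hbck]
      show M.Prefers b (applySeq id (φ.take L) (Equiv.swap 0 b b)) (Fin.last N)
      rw [Equiv.swap_apply_right, hb0]
      exact hprb
  have humono : ∀ b', b' < k → ∀ a, a < b' → u a < u b' := by
    intro b'
    induction b' with
    | zero => intro _ a ha; omega
    | succ b' ihb =>
      intro hbk a ha
      rcases Nat.lt_or_ge a b' with h | h
      · exact lt_trans (ihb (by omega) a h) (hmono b' (by omega))
      · have : a = b' := by omega
        subst this
        exact hmono a (by omega)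
  have hVmono : ∀ i j, i < j → j ≤ k + 1 → V i < V j := by
    intro i j hij hj
    rcases Nat.lt_or_ge j k with hjk | hjk
    · rw [hVu i (by omega), hVu j hjk]
      exact humono j hjk i hij
    rcases Nat.lt_or_ge i k with hik | hik
    · have h1 : V i = u i := hVu i hik
      have h2 : u i < L := (hgive i hik).2.2
      have h3 : V j = L + 1 ∨ V j = L := by
        rcases Nat.lt_or_ge j (k + 1) with h | h
        · right; have : j = k := by omega
          subst this; exact hVk
        · left; have : j = k + 1 := by omega
          subst this; exact hVk1
      omega
    · have hik' : i = k := by omega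
      have hj' : j = k + 1 := by omega
      subst hik'; subst hj'
      rw [hVk, hVk1]
      omega
  refine ⟨k + 1, Function.update c (k + 1) 0, ?_, ?_, ?_, ?_⟩
  · rw [Function.update_of_ne (by omega : (0 : ℕ) ≠ k + 1)]
    exact h0
  · exact Function.update_self _ _ _
  · intro m hm
    rcases Nat.lt_or_ge (m + 1) k with h | h
    · rw [Function.update_of_ne (by omega : m ≠ k + 1),
        Function.update_of_ne (by omega : m + 1 ≠ k + 1)]
      exact harc m h
    rcases Nat.lt_or_ge m k with h' | h'
    · have hmk : m + 1 = k := by omega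
      rw [Function.update_of_ne (by omega : m ≠ k + 1),
        Function.update_of_ne (by omega : m + 1 ≠ k + 1), hmk]
      exact harc' m hmk
    · have hmk : m = k := by omega
      subst hmk
      rw [Function.update_of_ne (by omega : m ≠ m + 1), Function.update_self]
      exact ⟨by rw [hbck]; exact hadj0.symm, by rw [hbck]; exact hprb, hpr0⟩
  · intro m m' hm hm' he
    rcases lt_trichotomy m m' with h | h | h
    · exfalso
      have h2 := hV1 m' hm'
      rw [← he] at h2
      exact Aux6.noRehold M φ hvalid (Fin.last N) _ (V m) (V m') (hV2 m (by omega))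
        (hVmono m m' h hm') (by have := hVle m' hm'; omega) h2
    · exact h
    · exfalso
      have h2 := hV1 m hm
      rw [he] at h2
      exact Aux6.noRehold M φ hvalid (Fin.last N) _ (V m') (V m) (hV2 m' (by omega))
        (hVmono m' m h hm) (by have := hVle m hm; omega) h2
end

section
/- Let the underlying graph be a path on agents 1,…,n. If in a sequence of swaps two distinct objects w and y are each only moved to the right (every swap involving w, and every swap involving y, transfers that object to a higher-indexed agent), then w and y are never swapped with each other, and their relative order is preserved: in every assignment of the sequence, the one of w,y that was initially held by the lower-indexed agent is still held by a lower-indexed agent than the other. -/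
/-- The path graph on `N` agents: agents `i` and `i+1` are adjacent. -/
def pathGraph' (N : ℕ) : SimpleGraph (Fin N) where
  Adj i j := i.val + 1 = j.val ∨ j.val + 1 = i.val
  symm := by constructor; intro i j h; exact h.symm
  loopless := by constructor; intro i h; rcases h with h | h <;> omega

/-- Swap `τ` exchanges the objects `u` and `v`. -/
def Swap.exchanges {N : ℕ} (τ : Swap N) (u v : Fin N) : Prop :=
  (τ.o1 = u ∧ τ.o2 = v) ∨ (τ.o1 = v ∧ τ.o2 = u)

/-- Swap `τ` takes place over the edge `{j, j+1}` of the path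
(agents here being indexed by their `Fin` value). -/
def Swap.onEdge {N : ℕ} (τ : Swap N) (j : ℕ) : Prop :=
  (τ.a1.val = j ∧ τ.a2.val = j + 1) ∨ (τ.a2.val = j ∧ τ.a1.val = j + 1)

lemma swap_key {N : ℕ} (σ : Fin (N+1) → Fin (N+1)) (hinj : Function.Injective σ)
    (a1 a2 : Fin (N+1)) (hadj : a1.val + 1 = a2.val ∨ a2.val + 1 = a1.val)
    (w y : Fin (N+1))
    (hw1 : σ a1 = w → a1.val < a2.val) (hw2 : σ a2 = w → a2.val < a1.val)
    (hy1 : σ a1 = y → a1.val < a2.val) (hy2 : σ a2 = y → a2.val < a1.val)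
    (a b : Fin (N+1)) (ha : σ a = w) (hb : σ b = y) (hab : a.val < b.val) :
    (Equiv.swap a1 a2 a).val < (Equiv.swap a1 a2 b).val := by
  by_cases hA1 : a = a1
  · subst hA1
    have h12 : a.val < a2.val := hw1 ha
    have hBne1 : b ≠ a := by intro h; subst h; omega
    have hBne2 : b ≠ a2 := by
      intro h; subst h
      have := hy2 hb; omega
    rw [Equiv.swap_apply_left, Equiv.swap_apply_of_ne_of_ne hBne1 hBne2]
    have : b.val ≠ a2.val := fun h => hBne2 (Fin.ext h)
    omega
  · by_cases hA2 : a = a2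
    · subst hA2
      have h21 : a.val < a1.val := hw2 ha
      have hBne2 : b ≠ a := by intro h; subst h; omega
      have hBne1 : b ≠ a1 := by
        intro h; subst h
        have := hy1 hb; omega
      rw [Equiv.swap_apply_right, Equiv.swap_apply_of_ne_of_ne hBne1 hBne2]
      have : b.val ≠ a1.val := fun h => hBne1 (Fin.ext h)
      omega
    · rw [Equiv.swap_apply_of_ne_of_ne hA1 hA2]
      by_cases hB1 : b = a1
      · subst hB1
        have := hy1 hb
        rw [Equiv.swap_apply_left]; omega
      · by_cases hB2 : b = a2
        · subst hB2
          have := hy2 hb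
          rw [Equiv.swap_apply_right]; omega
        · rw [Equiv.swap_apply_of_ne_of_ne hB1 hB2]; exact hab

lemma seq_key {N : ℕ} (M : SwapModel (N+1)) (hG : M.G = pathGraph' (N+1))
    (w y : Fin (N+1)) (φ : List (Swap (N+1))) :
    ∀ (σ : Fin (N+1) → Fin (N+1)),
      Function.Injective σ → M.ValidSeq σ φ →
      (∀ τ ∈ φ, (τ.o1 = w → τ.a1.val < τ.a2.val) ∧ (τ.o2 = w → τ.a2.val < τ.a1.val)) →
      (∀ τ ∈ φ, (τ.o1 = y → τ.a1.val < τ.a2.val) ∧ (τ.o2 = y → τ.a2.val < τ.a1.val)) →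
      ∀ a b : Fin (N+1), σ a = w → σ b = y → a < b →
      ∀ k, k ≤ φ.length → ∀ a' b' : Fin (N+1),
        SwapModel.applySeq σ (φ.take k) a' = w →
        SwapModel.applySeq σ (φ.take k) b' = y → a' < b' := by
  induction φ with
  | nil =>
    intro σ hinj _ _ _ a b ha hb hab k hk a' b' ha' hb'
    simp at hk; subst hk
    simp only [List.take_nil, SwapModel.applySeq] at ha' hb'
    have e1 : a' = a := hinj (ha'.trans ha.symm)
    have e2 : b' = b := hinj (hb'.trans hb.symm)
    subst e1; subst e2; exact hab
  | cons τ φ' ih =>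
    intro σ hinj hvalid hw hy a b ha hb hab k hk a' b' ha' hb'
    obtain ⟨hadm, hvalid'⟩ := hvalid
    match k with
    | 0 =>
      simp only [List.take_zero, SwapModel.applySeq] at ha' hb'
      have e1 : a' = a := hinj (ha'.trans ha.symm)
      have e2 : b' = b := hinj (hb'.trans hb.symm)
      subst e1; subst e2; exact hab
    | k + 1 =>
      obtain ⟨ho1, ho2, hadj, _, _⟩ := hadm
      rw [hG] at hadj
      have hadj' : τ.a1.val + 1 = τ.a2.val ∨ τ.a2.val + 1 = τ.a1.val := hadj
      have hwτ := hw τ List.mem_cons_self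
      have hyτ := hy τ List.mem_cons_self
      have hkey := swap_key σ hinj τ.a1 τ.a2 hadj' w y
        (fun h => hwτ.1 (ho1.symm.trans h)) (fun h => hwτ.2 (ho2.symm.trans h))
        (fun h => hyτ.1 (ho1.symm.trans h)) (fun h => hyτ.2 (ho2.symm.trans h))
        a b ha hb hab
      have hinj' : Function.Injective (SwapModel.applySwap σ τ) :=
        hinj.comp (Equiv.swap τ.a1 τ.a2).injective
      have ha2 : SwapModel.applySwap σ τ (Equiv.swap τ.a1 τ.a2 a) = w := by
        simpa [SwapModel.applySwap] using ha
      have hb2 : SwapModel.applySwap σ τ (Equiv.swap τ.a1 τ.a2 b) = y := by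
        simpa [SwapModel.applySwap] using hb
      have hk' : k ≤ φ'.length := by simpa using hk
      have htake : (τ :: φ').take (k + 1) = τ :: φ'.take k := rfl
      rw [htake] at ha' hb'
      simp only [SwapModel.applySeq] at ha' hb'
      exact ih (SwapModel.applySwap σ τ) hinj' hvalid'
        (fun τ' h => hw τ' (List.mem_cons_of_mem _ h))
        (fun τ' h => hy τ' (List.mem_cons_of_mem _ h))
        _ _ ha2 hb2 hkey k hk' a' b' ha' hb'

/-- The underlying graph is the path on agents `0, 1, …, N`.
If in a sequence of swaps two distinct objects `w` and `y` are each only moved to the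
right (every swap involving them transfers them to a higher-indexed agent), then `w`
and `y` are never swapped with each other, and their relative order is preserved: in
every assignment of the sequence, the one of `w, y` that was initially held by the
lower-indexed agent is still held by a lower-indexed agent than the other. -/
theorem statement9 (N : ℕ) (M : SwapModel (N + 1)) (hG : M.G = pathGraph' (N + 1))
    (σ0 : Fin (N + 1) → Fin (N + 1)) (hσ0 : M.IsAssignment σ0)
    (φ : List (Swap (N + 1))) (hvalid : M.ValidSeq σ0 φ)
    (w y : Fin (N + 1)) (hwy : w ≠ y)
    (hw : ∀ τ ∈ φ, (τ.o1 = w → τ.a1.val < τ.a2.val) ∧ (τ.o2 = w → τ.a2.val < τ.a1.val))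
    (hy : ∀ τ ∈ φ, (τ.o1 = y → τ.a1.val < τ.a2.val) ∧ (τ.o2 = y → τ.a2.val < τ.a1.val)) :
    (¬ ∃ τ ∈ φ, τ.exchanges w y) ∧
    (∀ aw ay : Fin (N + 1), σ0 aw = w → σ0 ay = y → aw < ay →
      ∀ k, k ≤ φ.length → ∀ a b : Fin (N + 1),
        SwapModel.applySeq σ0 (φ.take k) a = w →
        SwapModel.applySeq σ0 (φ.take k) b = y → a < b) := by
  constructor
  · rintro ⟨τ, hmem, hex⟩
    rcases hex with ⟨h1, h2⟩ | ⟨h1, h2⟩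
    · have := (hw τ hmem).1 h1
      have := (hy τ hmem).2 h2
      omega
    · have := (hy τ hmem).1 h1
      have := (hw τ hmem).2 h2
      omega
  · intro aw ay haw hay hlt k hk a b ha hb
    exact seq_key M hG w y φ σ0 hσ0.1.injective hvalid hw hy aw ay haw hay hlt k hk a b ha hb
end

section
/- Let the underlying graph be a path on agents 1,…,n, with σ_0(n) = x and target agent I < n. In every sequence of swaps after which agent I holds x, object x passes through each of the edges {I+t−1, I+t} for t = 1,…,n−I exactly once; equivalently, x is swapped exactly once over each edge lying between agent I and agent n. -/
section Aux

open SwapModel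

variable {N : ℕ}

lemma applySeq_bijective {σ : Fin N → Fin N} (hσ : Function.Bijective σ) :
    ∀ φ : List (Swap N), Function.Bijective (SwapModel.applySeq σ φ) := by
  intro φ
  induction φ generalizing σ with
  | nil => exact hσ
  | cons τ φ ih => exact ih (hσ.comp (Equiv.swap τ.a1 τ.a2).bijective)

lemma validSeq_step (M : SwapModel N) :
    ∀ (φ : List (Swap N)) (σ : Fin N → Fin N), M.ValidSeq σ φ →
      ∀ (k : ℕ) (τ : Swap N), φ[k]? = some τ →
        M.Admitted (SwapModel.applySeq σ (φ.take k)) τ ∧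
          SwapModel.applySeq σ (φ.take (k + 1)) =
            SwapModel.applySwap (SwapModel.applySeq σ (φ.take k)) τ
  | [], σ, _, k, τ, hk => by simp at hk
  | τ' :: φ, σ, h, 0, τ, hk => by
      simp only [List.getElem?_cons_zero, Option.some.injEq] at hk
      subst hk
      exact ⟨h.1, rfl⟩
  | τ' :: φ, σ, h, k + 1, τ, hk => by
      simp only [List.getElem?_cons_succ] at hk
      have := validSeq_step M φ (SwapModel.applySwap σ τ') h.2 k τ hk
      simpa [List.take_succ_cons, SwapModel.applySeq] using this

lemma SwapModel.Prefers.indexOf_lt {M : SwapModel N} {i u v : Fin N} (h : M.Prefers i u v) :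
    (M.pref i).idxOf u < (M.pref i).idxOf v := by
  obtain ⟨k, l, hkl, hu, hv⟩ := h
  rw [List.getElem?_eq_some_iff] at hu hv
  obtain ⟨hk, rfl⟩ := hu
  obtain ⟨hl, rfl⟩ := hv
  rw [List.Nodup.idxOf_getElem (M.nodup i) k hk, List.Nodup.idxOf_getElem (M.nodup i) l hl]
  exact hkl

end Aux

/-- The underlying graph is the path on agents `0, 1, …, N`
(these play the roles of the paper's agents `1, …, n` with `n = N + 1`), the target
object `x` is initially held by the last agent, and the target agent `I` is not the
last agent.  In every sequence of swaps after which agent `I` holds `x`, object `x`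
passes through each of the edges `{I + t - 1, I + t}` for `t = 1, …, N - I` exactly
once; i.e. `x` is swapped exactly once over each edge lying between agent `I` and
the last agent. -/
theorem statement10 (N : ℕ) (M : SwapModel (N + 1)) (hG : M.G = pathGraph' (N + 1))
    (σ0 : Fin (N + 1) → Fin (N + 1)) (hσ0 : M.IsAssignment σ0)
    (x : Fin (N + 1)) (hx : σ0 (Fin.last N) = x)
    (I : Fin (N + 1)) (hI : I < Fin.last N)
    (φ : List (Swap (N + 1))) (hvalid : M.ValidSeq σ0 φ)
    (hend : SwapModel.applySeq σ0 φ I = x) :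
    ∀ t : ℕ, 1 ≤ t → t ≤ N - I.val →
      ∃! k : ℕ, ∃ τ : Swap (N + 1), φ[k]? = some τ ∧ (τ.o1 = x ∨ τ.o2 = x) ∧
        τ.onEdge (I.val + t - 1) := by
  classical
  obtain ⟨hbij0, -⟩ := hσ0
  set L := φ.length with hLdef
  set σs : ℕ → Fin (N + 1) → Fin (N + 1) :=
    fun k => SwapModel.applySeq σ0 (φ.take k) with hσs
  have bij : ∀ k, Function.Bijective (σs k) := fun k => applySeq_bijective hbij0 _
  set hol : ℕ → Fin (N + 1) := fun k => Function.invFun (σs k) x with hholdef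
  have hhol : ∀ k, σs k (hol k) = x := fun k => Function.invFun_eq ((bij k).2 x)
  have huniq : ∀ k a, σs k a = x → a = hol k := fun k a ha =>
    (bij k).1 (ha.trans (hhol k).symm)
  have step : ∀ k, k < L → ∃ τ, φ[k]? = some τ ∧ M.Admitted (σs k) τ ∧
      σs (k + 1) = SwapModel.applySwap (σs k) τ := by
    intro k hk
    exact ⟨φ[k], List.getElem?_eq_getElem hk,
      validSeq_step M φ σ0 hvalid k φ[k] (List.getElem?_eq_getElem hk)⟩
  have holStep : ∀ k, k < L → ∀ τ : Swap (N + 1), M.Admitted (σs k) τ →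
      σs (k + 1) = SwapModel.applySwap (σs k) τ →
      hol (k + 1) = Equiv.swap τ.a1 τ.a2 (hol k) := by
    intro k hk τ hadm hnext
    refine (huniq (k + 1) _ ?_).symm
    rw [hnext]
    show σs k (Equiv.swap τ.a1 τ.a2 (Equiv.swap τ.a1 τ.a2 (hol k))) = x
    rw [Equiv.swap_apply_self]
    exact hhol k
  have improve : ∀ (a : Fin (N + 1)) k, k < L →
      σs (k + 1) a = σs k a ∨ M.Prefers a (σs (k + 1) a) (σs k a) := by
    intro a k hk
    obtain ⟨τ, hτ, hadm, hnext⟩ := step k hk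
    obtain ⟨h1, h2, hadj, hp1, hp2⟩ := hadm
    rw [hnext]
    by_cases ha1 : a = τ.a1
    · subst ha1
      right
      show M.Prefers τ.a1 (σs k (Equiv.swap τ.a1 τ.a2 τ.a1)) (σs k τ.a1)
      rw [Equiv.swap_apply_left, h1, h2]
      exact hp1
    by_cases ha2 : a = τ.a2
    · subst ha2
      right
      show M.Prefers τ.a2 (σs k (Equiv.swap τ.a1 τ.a2 τ.a2)) (σs k τ.a2)
      rw [Equiv.swap_apply_right, h1, h2]
      exact hp2
    · left
      show σs k (Equiv.swap τ.a1 τ.a2 a) = σs k a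
      rw [Equiv.swap_apply_of_ne_of_ne ha1 ha2]
  set rk : Fin (N + 1) → ℕ → ℕ := fun a k => (M.pref a).idxOf (σs k a) with hrk
  have rk_step : ∀ (a : Fin (N + 1)) k, k < L →
      σs (k + 1) a = σs k a ∨ rk a (k + 1) < rk a k := by
    intro a k hk
    rcases improve a k hk with h | h
    · exact Or.inl h
    · exact Or.inr (SwapModel.Prefers.indexOf_lt h)
  have rk_mono : ∀ (a : Fin (N + 1)) k, k ≤ L → ∀ s, s ≤ k → rk a k ≤ rk a s := by
    intro a k
    induction k with
    | zero =>
      intro _ s hs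
      have : s = 0 := Nat.le_zero.mp hs
      subst this; exact le_rfl
    | succ k ih =>
      intro hk s hs
      rcases Nat.eq_or_lt_of_le hs with rfl | hs'
      · exact le_rfl
      · have h1 : rk a (k + 1) ≤ rk a k := by
          rcases rk_step a k (by omega) with h | h
          · simp only [hrk, h]; exact le_rfl
          · omega
        exact le_trans h1 (ih (by omega) s (by omega))
  have const : ∀ (a : Fin (N + 1)) s s' k, s ≤ k → k < s' → s' ≤ L →
      σs s a = σs s' a → σs (k + 1) a = σs k a := by
    intro a s s' k hsk hks' hs'L heq
    rcases rk_step a k (by omega) with h | h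
    · exact h
    · exfalso
      have h1 : rk a s' ≤ rk a (k + 1) := rk_mono a s' hs'L (k + 1) (by omega)
      have h2 : rk a k ≤ rk a s := rk_mono a k (by omega) s hsk
      have h3 : rk a s = rk a s' := by simp only [hrk, heq]
      omega
  intro t ht1 ht2
  have hIN : I.val < N := by simpa [Fin.lt_def] using hI
  set j := I.val + t - 1 with hj
  have hjI : I.val ≤ j := by omega
  have hjN : j + 1 ≤ N := by omega
  have h0 : hol 0 = Fin.last N := (huniq 0 _ hx).symm
  have hLI : hol L = I := by
    refine (huniq L I ?_).symm
    show SwapModel.applySeq σ0 (φ.take L) I = x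
    rw [hLdef, List.take_length]
    exact hend
  have sb : ∀ k, k < L → (hol (k + 1)).val = (hol k).val ∨
      (hol (k + 1)).val + 1 = (hol k).val ∨ (hol k).val + 1 = (hol (k + 1)).val := by
    intro k hk
    obtain ⟨τ, hτ, hadm, hnext⟩ := step k hk
    have hswap := holStep k hk τ hadm hnext
    have hadj : τ.a1.val + 1 = τ.a2.val ∨ τ.a2.val + 1 = τ.a1.val := by
      have := hadm.2.2.1
      rw [hG] at this
      exact this
    by_cases h1 : hol k = τ.a1
    · have e1 : (hol (k + 1)).val = τ.a2.val := by
        rw [hswap, h1, Equiv.swap_apply_left]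
      have e2 : (hol k).val = τ.a1.val := congrArg Fin.val h1
      omega
    by_cases h2 : hol k = τ.a2
    · have e1 : (hol (k + 1)).val = τ.a1.val := by
        rw [hswap, h2, Equiv.swap_apply_right]
      have e2 : (hol k).val = τ.a2.val := congrArg Fin.val h2
      omega
    · have e1 : hol (k + 1) = hol k := by
        rw [hswap, Equiv.swap_apply_of_ne_of_ne h1 h2]
      rw [e1]
      omega
  have equiv : ∀ k : ℕ,
      (∃ τ : Swap (N + 1), φ[k]? = some τ ∧ (τ.o1 = x ∨ τ.o2 = x) ∧ τ.onEdge j) ↔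
      (k < L ∧ (((hol k).val = j ∧ (hol (k + 1)).val = j + 1) ∨
        ((hol k).val = j + 1 ∧ (hol (k + 1)).val = j))) := by
    intro k
    constructor
    · rintro ⟨τ, hτ, hxτ, hedge⟩
      have hkL : k < L := by
        by_contra h
        rw [List.getElem?_eq_none (by omega)] at hτ
        cases hτ
      obtain ⟨τ2, hτ2, hadm, hnext⟩ := step k hkL
      have hττ : τ2 = τ := by
        rw [hτ] at hτ2
        exact (Option.some.inj hτ2).symm
      rw [hττ] at hadm hnext
      refine ⟨hkL, ?_⟩
      have hswap := holStep k hkL τ hadm hnext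
      rcases hxτ with hx1 | hx2
      · have hA : hol k = τ.a1 := (huniq k τ.a1 (by rw [hadm.1, hx1])).symm
        have hB : (hol (k + 1)).val = τ.a2.val := by
          rw [hswap, hA, Equiv.swap_apply_left]
        have hAv : (hol k).val = τ.a1.val := congrArg Fin.val hA
        rcases hedge with ⟨e1, e2⟩ | ⟨e1, e2⟩
        · left; omega
        · right; omega
      · have hA : hol k = τ.a2 := (huniq k τ.a2 (by rw [hadm.2.1, hx2])).symm
        have hB : (hol (k + 1)).val = τ.a1.val := by
          rw [hswap, hA, Equiv.swap_apply_right]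
        have hAv : (hol k).val = τ.a2.val := congrArg Fin.val hA
        rcases hedge with ⟨e1, e2⟩ | ⟨e1, e2⟩
        · right; omega
        · left; omega
    · rintro ⟨hkL, hC⟩
      obtain ⟨τ, hτ, hadm, hnext⟩ := step k hkL
      have hswap := holStep k hkL τ hadm hnext
      have hne : hol (k + 1) ≠ hol k := by
        intro h
        have hv := congrArg Fin.val h
        rcases hC with ⟨e1, e2⟩ | ⟨e1, e2⟩ <;> omega
      have hmem : hol k = τ.a1 ∨ hol k = τ.a2 := by
        by_contra h
        push_neg at h
        exact hne (by rw [hswap, Equiv.swap_apply_of_ne_of_ne h.1 h.2])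
      refine ⟨τ, hτ, ?_⟩
      rcases hmem with hA | hA
      · have hx1 : τ.o1 = x := by rw [← hadm.1, ← hA]; exact hhol k
        have hB : (hol (k + 1)).val = τ.a2.val := by
          rw [hswap, hA, Equiv.swap_apply_left]
        have hAv : (hol k).val = τ.a1.val := congrArg Fin.val hA
        refine ⟨Or.inl hx1, ?_⟩
        rcases hC with ⟨e1, e2⟩ | ⟨e1, e2⟩
        · exact Or.inl ⟨by omega, by omega⟩
        · exact Or.inr ⟨by omega, by omega⟩
      · have hx2 : τ.o2 = x := by rw [← hadm.2.1, ← hA]; exact hhol k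
        have hB : (hol (k + 1)).val = τ.a1.val := by
          rw [hswap, hA, Equiv.swap_apply_right]
        have hAv : (hol k).val = τ.a2.val := congrArg Fin.val hA
        refine ⟨Or.inr hx2, ?_⟩
        rcases hC with ⟨e1, e2⟩ | ⟨e1, e2⟩
        · exact Or.inr ⟨by omega, by omega⟩
        · exact Or.inl ⟨by omega, by omega⟩
  -- no two crossings
  have noTwo : ∀ k1 k2 : ℕ,
      (k1 < L ∧ (((hol k1).val = j ∧ (hol (k1 + 1)).val = j + 1) ∨
        ((hol k1).val = j + 1 ∧ (hol (k1 + 1)).val = j))) →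
      (k2 < L ∧ (((hol k2).val = j ∧ (hol (k2 + 1)).val = j + 1) ∨
        ((hol k2).val = j + 1 ∧ (hol (k2 + 1)).val = j))) →
      k1 < k2 → False := by
    rintro k1 k2 ⟨h1L, hC1⟩ ⟨h2L, hC2⟩ hlt
    have hneBA : hol k1 ≠ hol (k1 + 1) := by
      intro h
      have hv := congrArg Fin.val h
      rcases hC1 with ⟨e1, e2⟩ | ⟨e1, e2⟩ <;> omega
    have hcase : (hol k2 = hol k1 ∧ hol (k2 + 1) = hol (k1 + 1)) ∨
        (hol k2 = hol (k1 + 1) ∧ hol (k2 + 1) = hol k1) := by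
      rcases hC1 with ⟨a1, a2⟩ | ⟨a1, a2⟩ <;> rcases hC2 with ⟨b1, b2⟩ | ⟨b1, b2⟩
      · exact Or.inl ⟨Fin.val_injective (by omega), Fin.val_injective (by omega)⟩
      · exact Or.inr ⟨Fin.val_injective (by omega), Fin.val_injective (by omega)⟩
      · exact Or.inr ⟨Fin.val_injective (by omega), Fin.val_injective (by omega)⟩
      · exact Or.inl ⟨Fin.val_injective (by omega), Fin.val_injective (by omega)⟩
    rcases hcase with ⟨e1, e2⟩ | ⟨e1, e2⟩
    · -- x returns to agent hol (k1+1)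
      have hx1 : σs (k1 + 1) (hol (k1 + 1)) = x := hhol _
      have hx2 : σs (k2 + 1) (hol (k1 + 1)) = x := by rw [← e2]; exact hhol _
      have hcst := const (hol (k1 + 1)) (k1 + 1) (k2 + 1) k2 (by omega) (by omega)
        (by omega) (hx1.trans hx2.symm)
      have hthis : σs k2 (hol (k1 + 1)) = x := by rw [← hcst]; exact hx2
      have heq := huniq k2 _ hthis
      exact hneBA ((heq.trans e1).symm)
    · -- x returns to agent hol k1
      have hx1 : σs k1 (hol k1) = x := hhol _
      have hx2 : σs (k2 + 1) (hol k1) = x := by rw [← e2]; exact hhol _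
      have hcst := const (hol k1) k1 (k2 + 1) k1 le_rfl (by omega) (by omega)
        (hx1.trans hx2.symm)
      have hthis : σs (k1 + 1) (hol k1) = x := by rw [hcst]; exact hx1
      exact hneBA (huniq _ _ hthis)
  -- existence via findGreatest
  set P : ℕ → Prop := fun k => j + 1 ≤ (hol k).val with hP
  have hP0 : P 0 := by
    show j + 1 ≤ (hol 0).val
    rw [h0, Fin.val_last]
    exact hjN
  have hPL : ¬P L := by
    show ¬(j + 1 ≤ (hol L).val)
    rw [hLI]
    omega
  set k0 := Nat.findGreatest P L with hk0def
  have hk0P : j + 1 ≤ (hol k0).val := Nat.findGreatest_spec (Nat.zero_le L) hP0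
  have hk0le : k0 ≤ L := Nat.findGreatest_le L
  have hk0lt : k0 < L := lt_of_le_of_ne hk0le (fun h => hPL (h ▸ hk0P))
  have hk1 : ¬P (k0 + 1) :=
    Nat.findGreatest_is_greatest (Nat.lt_succ_self _) (by omega)
  have hk1' : ¬(j + 1 ≤ (hol (k0 + 1)).val) := hk1
  have hsb := sb k0 hk0lt
  have hv1 : (hol k0).val = j + 1 := by omega
  have hv2 : (hol (k0 + 1)).val = j := by omega
  refine ⟨k0, (equiv k0).2 ⟨hk0lt, Or.inr ⟨hv1, hv2⟩⟩, ?_⟩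
  intro k hk
  have hCk := (equiv k).1 hk
  have hCk0 : k0 < L ∧ (((hol k0).val = j ∧ (hol (k0 + 1)).val = j + 1) ∨
      ((hol k0).val = j + 1 ∧ (hol (k0 + 1)).val = j)) :=
    ⟨hk0lt, Or.inr ⟨hv1, hv2⟩⟩
  rcases lt_trichotomy k k0 with h | h | h
  · exact absurd h (fun h => noTwo k k0 hCk hCk0 h)
  · exact h
  · exact absurd h (fun h => noTwo k0 k hCk0 hCk h)
end
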